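/- Let d = 2 and set ε_0 = (5π/(44√2))². Then for every 0 < ε < ε_0, no minimizer of the energy E_ε over probability measures on ℝ² is radially symmetric. -/

import Mathlib

open MeasureTheory Metric Filter Set
open scoped ENNReal NNReal Topology

noncomputable section

/-- The part of an extended-real number as an `ℝ≥0∞` value: negatives (and `⊥`)
are sent to `0`, and `⊤` to `⊤`. -/
def EReal.toENNReal' (x : EReal) : ℝ≥0∞ := if x = ⊤ then ⊤ else ENNReal.ofReal x.toReal

/-- Integral of an `(ℝ ∪ {±∞})`-valued function: positive part minus negative part. -/
def eInt {X : Type*} [MeasurableSpace X] (μ : Measure X) (f : X → EReal) : EReal :=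
  ((∫⁻ x, (f x).toENNReal' ∂μ : ℝ≥0∞) : EReal) -
    ((∫⁻ x, (-(f x)).toENNReal' ∂μ : ℝ≥0∞) : EReal)

/-- The interaction energy `E[ρ] = (1/2) ∫∫ W (x - y) dρ(y) dρ(x)`. -/
def energy (d : ℕ) (W : EuclideanSpace ℝ (Fin d) → EReal)
    (ρ : Measure (EuclideanSpace ℝ (Fin d))) : EReal :=
  ((1/2 : ℝ) : EReal) * eInt (ρ.prod ρ) (fun p => W (p.1 - p.2))

/-- Condition (W0): locally integrable, bounded from below, lower semicontinuous, even. -/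
def W0 (d : ℕ) (W : EuclideanSpace ℝ (Fin d) → EReal) : Prop :=
  (∀ K : Set (EuclideanSpace ℝ (Fin d)), IsCompact K → ∫⁻ x in K, (W x).toENNReal' < ⊤) ∧
  (∃ M : ℝ, ∀ x, (M : EReal) ≤ W x) ∧
  LowerSemicontinuous W ∧ (∀ x, W (-x) = W x)

/-- A measure on `ℝ^d` is radially symmetric if it is invariant under every
origin-fixing rotation (linear isometry) of `ℝ^d`. -/
def RadiallySymmetric {d : ℕ} (ρ : Measure (EuclideanSpace ℝ (Fin d))) : Prop :=
  ∀ Q : EuclideanSpace ℝ (Fin d) ≃ₗᵢ[ℝ] EuclideanSpace ℝ (Fin d), Measure.map (⇑Q) ρ = ρ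

/-- `μ` is a minimizer of the interaction energy with potential `W` over probability
measures on `ℝ^d`. -/
def IsMinimizer (d : ℕ) (W : EuclideanSpace ℝ (Fin d) → EReal)
    (μ : Measure (EuclideanSpace ℝ (Fin d))) : Prop :=
  IsProbabilityMeasure μ ∧ ∀ ρ : Measure (EuclideanSpace ℝ (Fin d)),
    IsProbabilityMeasure ρ → energy d W μ ≤ energy d W ρ

/-- The prototype potential `W_ε`: equal to `-1` when `||x| - 1| ≤ ε` and `0` otherwise. -/
def Weps (d : ℕ) (ε : ℝ) (x : EuclideanSpace ℝ (Fin d)) : ℝ :=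
  if |‖x‖ - 1| ≤ ε then -1 else 0

namespace SymBreak

lemma arccos_antitone : Antitone Real.arccos := by
  intro x y h
  simp only [Real.arccos_eq_pi_div_two_sub_arcsin]
  have := Real.monotone_arcsin h
  linarith

lemma one_sub_cos_eq (u : ℝ) : 1 - Real.cos (2 * u) = 2 * Real.sin u ^ 2 := by
  have h1 := Real.cos_two_mul u
  have h2 := Real.sin_sq_add_cos_sq u
  nlinarith

lemma arccos_sub_arccos_le {a b : ℝ} (ha : -1 ≤ a) (hab : a ≤ b) (hb : b ≤ 1) :
    Real.arccos a - Real.arccos b ≤ Real.arccos (1 - (b - a)) := by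
  set θa := Real.arccos a with hθa
  set θb := Real.arccos b with hθb
  have hθa_le : θa ≤ Real.pi := Real.arccos_le_pi a
  have hθb_le : θb ≤ Real.pi := Real.arccos_le_pi b
  have hθa_nn : 0 ≤ θa := Real.arccos_nonneg a
  have hθb_nn : 0 ≤ θb := Real.arccos_nonneg b
  have hδ : 0 ≤ θa - θb := by
    have := arccos_antitone hab; simp only [← hθa, ← hθb] at this; linarith
  have hca : Real.cos θa = a := Real.cos_arccos ha (hab.trans hb)
  have hcb : Real.cos θb = b := Real.cos_arccos (ha.trans hab) hb
  set δ := θa - θb with hδdef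
  have hδπ : δ ≤ Real.pi := by simp [hδdef]; linarith
  -- b - a = 2 sin σ sin (δ/2)
  have hkey : b - a = 2 * Real.sin ((θa + θb) / 2) * Real.sin (δ / 2) := by
    have := Real.cos_sub_cos θb θa
    rw [hca, hcb] at this
    have hs : Real.sin ((θb - θa) / 2) = - Real.sin (δ / 2) := by
      rw [hδdef]; rw [show (θb - θa) / 2 = -((θa - θb) / 2) by ring, Real.sin_neg]
    rw [hs] at this
    rw [show (θb + θa) / 2 = (θa + θb) / 2 by ring] at this
    linarith
  have hsin_half_nn : 0 ≤ Real.sin (δ / 2) :=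
    Real.sin_nonneg_of_nonneg_of_le_pi (by linarith) (by linarith [Real.pi_pos])
  have hsin_ge : Real.sin (δ / 2) ≤ Real.sin ((θa + θb) / 2) := by
    have hmem : δ / 2 ≤ (θa + θb) / 2 := by rw [hδdef]; linarith
    have hmem2 : (θa + θb) / 2 ≤ Real.pi - δ / 2 := by rw [hδdef]; linarith
    rcases le_or_gt ((θa + θb) / 2) (Real.pi / 2) with hc | hc
    · exact Real.strictMonoOn_sin.monotoneOn
        ⟨by linarith [Real.pi_pos], by linarith⟩ ⟨by linarith [Real.pi_pos], hc⟩ hmem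
    · rw [← Real.sin_pi_sub ((θa + θb) / 2)]
      exact Real.strictMonoOn_sin.monotoneOn
        ⟨by linarith [Real.pi_pos], by linarith⟩
        ⟨by linarith [Real.pi_pos], by linarith⟩ (by linarith)
  have hba : 1 - Real.cos δ ≤ b - a := by
    have h1 : 1 - Real.cos δ = 2 * Real.sin (δ / 2) ^ 2 := by
      have := one_sub_cos_eq (δ / 2); rw [show 2 * (δ / 2) = δ by ring] at this; linarith
    nlinarith
  have hcosδ : 1 - (b - a) ≤ Real.cos δ := by linarith
  calc δ = Real.arccos (Real.cos δ) := (Real.arccos_cos hδ hδπ).symm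
    _ ≤ Real.arccos (1 - (b - a)) := arccos_antitone hcosδ

lemma arccos_one_sub_le {w : ℝ} (hw : 0 ≤ w) (hw' : w ≤ Real.pi ^ 2 / 16) :
    Real.arccos (1 - w) ≤ 2 * Real.sqrt w := by
  rcases eq_or_lt_of_le hw with rfl | hw0
  · simp [Real.arccos_one, Real.sqrt_nonneg]
  set u := Real.sqrt w with hu
  have hu0 : 0 < u := Real.sqrt_pos.2 hw0
  have hu2 : u ^ 2 = w := Real.sq_sqrt hw
  have hπ : Real.pi < 3.15 := Real.pi_lt_d2
  have hu_le : u ^ 2 ≤ Real.pi ^ 2 / 16 := by rw [hu2]; exact hw'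
  have hπ2 : Real.pi ^ 2 < 9.9225 := by nlinarith [Real.pi_pos]
  have hu_le' : u ^ 2 ≤ 0.6202 := by nlinarith
  have hu1 : u ≤ 1 := by nlinarith
  have hsin : u - u ^ 3 / 4 < Real.sin u := by
    have := Real.sin_gt_sub_cube hu0; nlinarith [pow_pos hu0 3]
  have hcube_nn : 0 ≤ u - u ^ 3 / 4 := by nlinarith
  have hsq : (u - u ^ 3 / 4) ^ 2 ≤ Real.sin u ^ 2 := by nlinarith
  have hsin_sq : 2 * Real.sin u ^ 2 ≥ w := by nlinarith [sq_nonneg u, sq_nonneg (u^2)]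
  have hcos : Real.cos (2 * u) ≤ 1 - w := by
    have := one_sub_cos_eq u; linarith
  have h2u : 2 * u ≤ Real.pi := by nlinarith [Real.pi_gt_three]
  calc Real.arccos (1 - w) ≤ Real.arccos (Real.cos (2 * u)) := arccos_antitone hcos
    _ = 2 * u := Real.arccos_cos (by linarith) h2u


abbrev E2 := EuclideanSpace ℝ (Fin 2)

def Sset (ε : ℝ) : Set (E2 × E2) := {p | |‖p.1 - p.2‖ - 1| ≤ ε}

lemma isClosed_Sset (ε : ℝ) : IsClosed (Sset ε) := by
  have : Sset ε = (fun p : E2 × E2 => |‖p.1 - p.2‖ - 1|) ⁻¹' (Iic ε) := rfl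
  rw [this]
  exact IsClosed.preimage (by fun_prop) isClosed_Iic

lemma measurableSet_Sset (ε : ℝ) : MeasurableSet (Sset ε) :=
  (isClosed_Sset ε).measurableSet

lemma energy_eq (ε : ℝ) (ρ : Measure E2) [IsProbabilityMeasure ρ] :
    energy 2 (fun x => ((Weps 2 ε x : ℝ) : EReal)) ρ
      = (((-(((ρ.prod ρ) (Sset ε)).toReal) / 2 : ℝ)) : EReal) := by
  have h1 : ∀ p : E2 × E2, (((Weps 2 ε (p.1 - p.2) : ℝ) : EReal)).toENNReal' = 0 := by
    intro p
    rw [EReal.toENNReal']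
    rw [if_neg (by simp)]
    rw [EReal.toReal_coe]
    rw [ENNReal.ofReal_eq_zero]
    unfold Weps; split <;> norm_num
  have h2 : ∀ p : E2 × E2, ((-((Weps 2 ε (p.1 - p.2) : ℝ) : EReal))).toENNReal'
      = (Sset ε).indicator (fun _ => (1 : ℝ≥0∞)) p := by
    intro p
    rw [← EReal.coe_neg, EReal.toENNReal', if_neg (by simp), EReal.toReal_coe]
    by_cases hp : p ∈ Sset ε
    · rw [indicator_of_mem hp]
      have : Weps 2 ε (p.1 - p.2) = -1 := if_pos hp
      rw [this]; norm_num
    · rw [indicator_of_notMem hp]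
      have : Weps 2 ε (p.1 - p.2) = 0 := if_neg hp
      rw [this]; norm_num
  have hInt1 : (∫⁻ p, (((Weps 2 ε (p.1 - p.2) : ℝ) : EReal)).toENNReal' ∂(ρ.prod ρ)) = 0 := by
    simp only [h1, lintegral_zero]
  have hInt2 : (∫⁻ p, ((-((Weps 2 ε (p.1 - p.2) : ℝ) : EReal))).toENNReal' ∂(ρ.prod ρ))
      = (ρ.prod ρ) (Sset ε) := by
    simp only [h2]
    rw [lintegral_indicator (measurableSet_Sset ε)]
    simp
  rw [energy, eInt]
  simp only [hInt1, hInt2]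
  have hm : (ρ.prod ρ) (Sset ε) ≠ ⊤ := measure_ne_top _ _
  have hcoe : (((ρ.prod ρ) (Sset ε) : ℝ≥0∞) : EReal)
      = ((((ρ.prod ρ) (Sset ε)).toReal : ℝ) : EReal) := by
    conv_lhs => rw [← ENNReal.ofReal_toReal hm]
    rw [EReal.coe_ennreal_ofReal, max_eq_left ENNReal.toReal_nonneg]
  rw [hcoe]
  rw [EReal.coe_ennreal_zero, zero_sub, ← EReal.coe_neg, ← EReal.coe_mul,
    EReal.coe_eq_coe_iff]
  ring

/-! ### The triangle competitor -/

def tpa : E2 := (EuclideanSpace.equiv (Fin 2) ℝ).symm ![0, 0]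
def tpb : E2 := (EuclideanSpace.equiv (Fin 2) ℝ).symm ![1, 0]
def tpc : E2 := (EuclideanSpace.equiv (Fin 2) ℝ).symm ![1/2, Real.sqrt 3 / 2]

lemma norm_E2 (x : E2) : ‖x‖ = Real.sqrt (x 0 ^ 2 + x 1 ^ 2) := by
  rw [EuclideanSpace.norm_eq]
  congr 1
  rw [Fin.sum_univ_two]
  simp [Real.norm_eq_abs, sq_abs]

lemma dist_ab : ‖tpa - tpb‖ = 1 := by
  rw [norm_E2]
  have h0 : (tpa - tpb) 0 = -1 := by simp [tpa, tpb]
  have h1 : (tpa - tpb) 1 = 0 := by simp [tpa, tpb]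
  rw [h0, h1]; norm_num

lemma dist_ac : ‖tpa - tpc‖ = 1 := by
  rw [norm_E2]
  have h0 : (tpa - tpc) 0 = -(1/2) := by simp [tpa, tpc]
  have h1 : (tpa - tpc) 1 = -(Real.sqrt 3 / 2) := by simp [tpa, tpc]
  rw [h0, h1]
  have : Real.sqrt 3 ^ 2 = 3 := Real.sq_sqrt (by norm_num)
  rw [show (-(1/2) : ℝ) ^ 2 + (-(Real.sqrt 3 / 2)) ^ 2 = 1/4 + Real.sqrt 3 ^ 2 / 4 by ring, this]
  norm_num

lemma dist_bc : ‖tpb - tpc‖ = 1 := by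
  rw [norm_E2]
  have h0 : (tpb - tpc) 0 = 1/2 := by simp [tpb, tpc]; norm_num
  have h1 : (tpb - tpc) 1 = -(Real.sqrt 3 / 2) := by simp [tpb, tpc]
  rw [h0, h1]
  have : Real.sqrt 3 ^ 2 = 3 := Real.sq_sqrt (by norm_num)
  rw [show ((1/2) : ℝ) ^ 2 + (-(Real.sqrt 3 / 2)) ^ 2 = 1/4 + Real.sqrt 3 ^ 2 / 4 by ring, this]
  norm_num

def triMeasure : Measure E2 :=
  (3 : ℝ≥0∞)⁻¹ • (Measure.dirac tpa + Measure.dirac tpb + Measure.dirac tpc)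

instance : IsProbabilityMeasure triMeasure := by
  constructor
  rw [triMeasure]
  simp [Measure.add_apply]
  rw [show (3:ℝ≥0∞)⁻¹ + 3⁻¹ + 3⁻¹ = 3⁻¹ * 3 by ring]
  exact ENNReal.inv_mul_cancel (by norm_num) (by norm_num)

lemma mem_sec {ε : ℝ} (x y : E2) : y ∈ Prod.mk x ⁻¹' Sset ε ↔ |‖x - y‖ - 1| ≤ ε :=
  Iff.rfl

lemma tri_prod_Sset (ε : ℝ) (hε0 : 0 ≤ ε) (hε1 : ε < 1) :
    (triMeasure.prod triMeasure) (Sset ε) = 2/3 := by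
  rw [Measure.prod_apply (measurableSet_Sset ε)]
  set g : E2 → ℝ≥0∞ := fun x => triMeasure (Prod.mk x ⁻¹' Sset ε) with hg
  have hg_meas : Measurable g := measurable_measure_prodMk_left (measurableSet_Sset ε)
  have hsec_meas : ∀ x : E2, MeasurableSet (Prod.mk x ⁻¹' Sset ε) := fun x =>
    measurable_prodMk_left (measurableSet_Sset ε)
  -- membership facts
  have hself : ∀ x : E2, x ∉ Prod.mk x ⁻¹' Sset ε := by
    intro x hx
    rw [mem_sec] at hx
    rw [sub_self, norm_zero] at hx
    rw [abs_of_nonpos (by norm_num)] at hx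
    linarith
  have hmem : ∀ x y : E2, ‖x - y‖ = 1 → y ∈ Prod.mk x ⁻¹' Sset ε := by
    intro x y hxy
    rw [mem_sec, hxy]
    simpa using hε0
  have hval : ∀ x : E2, x ∈ ({tpa, tpb, tpc} : Set E2) → g x = 3⁻¹ * 2 := by
    intro x hx
    have hd : ∀ z : E2, Measure.dirac z (Prod.mk x ⁻¹' Sset ε)
        = (Prod.mk x ⁻¹' Sset ε).indicator (fun _ => (1:ℝ≥0∞)) z := fun z =>
      Measure.dirac_apply' z (hsec_meas x)
    have key : ∀ u v : E2, x = u → ‖u - v‖ = 1 →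
        Measure.dirac v (Prod.mk x ⁻¹' Sset ε) = 1 := by
      intro u v hxu huv
      rw [hd, indicator_of_mem (hmem x v (by rw [hxu, huv]))]
    have keyself : Measure.dirac x (Prod.mk x ⁻¹' Sset ε) = 0 := by
      rw [hd, indicator_of_notMem (hself x)]
    have hba : ‖tpb - tpa‖ = 1 := by rw [norm_sub_rev]; exact dist_ab
    have hca : ‖tpc - tpa‖ = 1 := by rw [norm_sub_rev]; exact dist_ac
    have hcb : ‖tpc - tpb‖ = 1 := by rw [norm_sub_rev]; exact dist_bc
    rw [hg]
    simp only [triMeasure, Measure.smul_apply, Measure.add_apply, smul_eq_mul]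
    rcases hx with rfl | rfl | rfl
    · rw [keyself, key tpa tpb rfl dist_ab, key tpa tpc rfl dist_ac]
      norm_num
    · rw [keyself, key tpb tpa rfl hba, key tpb tpc rfl dist_bc]
      norm_num
    · rw [keyself, key tpc tpa rfl hca, key tpc tpb rfl hcb]
      norm_num
  rw [show (triMeasure : Measure E2)
      = (3 : ℝ≥0∞)⁻¹ • (Measure.dirac tpa + Measure.dirac tpb + Measure.dirac tpc) from rfl]
  rw [lintegral_smul_measure, lintegral_add_measure, lintegral_add_measure,
    lintegral_dirac' _ hg_meas, lintegral_dirac' _ hg_meas, lintegral_dirac' _ hg_meas]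
  rw [hval tpa (by simp), hval tpb (by simp), hval tpc (by simp)]
  rw [smul_eq_mul, show (3:ℝ≥0∞)⁻¹ * (3⁻¹ * 2 + 3⁻¹ * 2 + 3⁻¹ * 2) = (3⁻¹ * 3) * (3⁻¹ * 2) by ring,
    ENNReal.inv_mul_cancel (by norm_num) (by norm_num), one_mul, ENNReal.div_eq_inv_mul]



lemma window_le {A : Set ℝ} (hA : MeasurableSet A)
    (hper : ∀ (x : ℝ) (n : ℤ), x + n * (2 * Real.pi) ∈ A ↔ x ∈ A) (c₀ : ℝ) :
    volume (A ∩ Ioc c₀ (c₀ + 2 * Real.pi)) ≤ volume (A ∩ Ioc 0 (2 * Real.pi)) := by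
  set T : ℝ := 2 * Real.pi with hT
  have hT0 : 0 < T := by positivity
  set k : ℤ := ⌈c₀ / T⌉ with hk
  have hk1 : c₀ ≤ T * k := by
    have h1 := Int.le_ceil (c₀ / T)
    rw [← hk] at h1
    have hd : c₀ / T * T = c₀ := div_mul_cancel₀ c₀ hT0.ne'
    nlinarith
  have hk2 : T * k < c₀ + T := by
    have h1 := Int.ceil_lt_add_one (c₀ / T)
    rw [← hk] at h1
    have hd : c₀ / T * T = c₀ := div_mul_cancel₀ c₀ hT0.ne'
    nlinarith
  set c' : ℝ := c₀ - T * (k - 1) with hc'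
  have hc'1 : 0 < c' := by rw [hc']; push_cast; nlinarith
  have hc'2 : c' ≤ T := by rw [hc']; push_cast; nlinarith
  have piece1 : volume (A ∩ Ioc c₀ (T * k)) = volume (A ∩ Ioc c' T) := by
    have hpre : (fun x : ℝ => x + T * (k - 1)) ⁻¹' (A ∩ Ioc c₀ (T * k)) = A ∩ Ioc c' T := by
      ext x
      simp only [mem_preimage, mem_inter_iff, mem_Ioc]
      have hx : x + T * (k - 1) ∈ A ↔ x ∈ A := by
        have := hper x (k - 1)
        rw [← this]
        constructor <;> (intro h; convert h using 2 <;> push_cast <;> ring_nf)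
      rw [hx]
      constructor
      · rintro ⟨h1, h2, h3⟩
        refine ⟨h1, by rw [hc']; push_cast at h2 ⊢ <;> linarith, ?_⟩
        push_cast at h3 ⊢; linarith
      · rintro ⟨h1, h2, h3⟩
        rw [hc'] at h2
        refine ⟨h1, by push_cast at h2 ⊢ <;> linarith, by push_cast at h3 ⊢ <;> linarith⟩
    rw [← hpre]
    exact (measure_preimage_add_right volume _ _).symm
  have piece2 : volume (A ∩ Ioc (T * k) (c₀ + T)) = volume (A ∩ Ioc 0 c') := by
    have hpre : (fun x : ℝ => x + T * k) ⁻¹' (A ∩ Ioc (T * k) (c₀ + T)) = A ∩ Ioc 0 c' := by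
      ext x
      simp only [mem_preimage, mem_inter_iff, mem_Ioc]
      have hx : x + T * k ∈ A ↔ x ∈ A := by
        have := hper x k
        rw [← this]
        constructor <;> (intro h; convert h using 2 <;> push_cast <;> ring_nf)
      rw [hx]
      constructor
      · rintro ⟨h1, h2, h3⟩
        exact ⟨h1, by linarith, by rw [hc']; linarith⟩
      · rintro ⟨h1, h2, h3⟩
        rw [hc'] at h3
        exact ⟨h1, by linarith, by linarith⟩
    rw [← hpre]
    exact (measure_preimage_add_right volume _ _).symm
  have hsub : A ∩ Ioc c₀ (c₀ + T) ⊆ (A ∩ Ioc c₀ (T * k)) ∪ (A ∩ Ioc (T * k) (c₀ + T)) := by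
    rw [← inter_union_distrib_left, Ioc_union_Ioc_eq_Ioc hk1 hk2.le]
  calc volume (A ∩ Ioc c₀ (c₀ + T))
      ≤ volume ((A ∩ Ioc c₀ (T * k)) ∪ (A ∩ Ioc (T * k) (c₀ + T))) := measure_mono hsub
    _ ≤ volume (A ∩ Ioc c₀ (T * k)) + volume (A ∩ Ioc (T * k) (c₀ + T)) := measure_union_le _ _
    _ = volume (A ∩ Ioc 0 c') + volume (A ∩ Ioc c' T) := by rw [piece1, piece2]; ring
    _ = volume ((A ∩ Ioc 0 c') ∪ (A ∩ Ioc c' T)) := by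
        rw [measure_union (Disjoint.mono inter_subset_right inter_subset_right
          (Ioc_disjoint_Ioc_of_le le_rfl)) (hA.inter measurableSet_Ioc)]
    _ ≤ volume (A ∩ Ioc 0 T) := by
        apply measure_mono
        rw [← inter_union_distrib_left, Ioc_union_Ioc_eq_Ioc hc'1.le hc'2]

lemma cos_preimage_Ioc_le {a b : ℝ} (ha : -1 ≤ a) (hab : a ≤ b) (hb : b ≤ 1) :
    volume (Real.cos ⁻¹' Icc a b ∩ Ioc 0 (2 * Real.pi))
      ≤ ENNReal.ofReal (2 * (Real.arccos a - Real.arccos b)) := by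
  have hsub : Real.cos ⁻¹' Icc a b ∩ Ioc 0 (2 * Real.pi) ⊆
      Icc (Real.arccos b) (Real.arccos a) ∪
        Icc (2 * Real.pi - Real.arccos a) (2 * Real.pi - Real.arccos b) := by
    rintro θ ⟨hθA, hθ1, hθ2⟩
    simp only [mem_preimage, mem_Icc] at hθA
    rcases le_or_gt θ Real.pi with hle | hgt
    · left
      have harc : Real.arccos (Real.cos θ) = θ := Real.arccos_cos hθ1.le hle
      exact ⟨by rw [← harc]; exact arccos_antitone hθA.2, by rw [← harc]; exact arccos_antitone hθA.1⟩
    · right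
      have hcos : Real.cos (2 * Real.pi - θ) = Real.cos θ := Real.cos_two_pi_sub θ
      have harc : Real.arccos (Real.cos (2 * Real.pi - θ)) = 2 * Real.pi - θ :=
        Real.arccos_cos (by linarith) (by linarith [Real.pi_pos])
      rw [hcos] at harc
      constructor
      · have : Real.arccos (Real.cos θ) ≤ Real.arccos a := arccos_antitone hθA.1
        rw [harc] at this; linarith
      · have : Real.arccos b ≤ Real.arccos (Real.cos θ) := arccos_antitone hθA.2
        rw [harc] at this; linarith
  have hd : 0 ≤ Real.arccos a - Real.arccos b := by
    have := arccos_antitone hab; linarith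
  calc volume (Real.cos ⁻¹' Icc a b ∩ Ioc 0 (2 * Real.pi))
      ≤ volume (Icc (Real.arccos b) (Real.arccos a) ∪
        Icc (2 * Real.pi - Real.arccos a) (2 * Real.pi - Real.arccos b)) := measure_mono hsub
    _ ≤ volume (Icc (Real.arccos b) (Real.arccos a)) +
        volume (Icc (2 * Real.pi - Real.arccos a) (2 * Real.pi - Real.arccos b)) :=
        measure_union_le _ _
    _ = ENNReal.ofReal (Real.arccos a - Real.arccos b)
        + ENNReal.ofReal (Real.arccos a - Real.arccos b) := by
        rw [Real.volume_Icc, Real.volume_Icc]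
        congr 1
        ring_nf
    _ = ENNReal.ofReal (2 * (Real.arccos a - Real.arccos b)) := by
        rw [← ENNReal.ofReal_add hd hd]; congr 1; ring


/-- The squared distance identity. -/
lemma dist_sq_eq (z w : ℂ) (θ : ℝ) :
    ‖z - Complex.exp (↑θ * Complex.I) * w‖ ^ 2
      = ‖z‖ ^ 2 + ‖w‖ ^ 2 - 2 * (‖z‖ * ‖w‖) *
        Real.cos (θ - (z * (starRingEnd ℂ) w).arg) := by
  set u : ℂ := Complex.exp (↑θ * Complex.I) * w with hu
  set ζ : ℂ := z * (starRingEnd ℂ) w with hζ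
  have h1 : ‖z - u‖ ^ 2 = Complex.normSq (z - u) := by
    rw [Complex.sq_norm]
  have h2 : Complex.normSq z = ‖z‖ ^ 2 := by rw [Complex.sq_norm]
  have h3 : Complex.normSq u = ‖w‖ ^ 2 := by
    rw [hu, Complex.sq_norm, Complex.normSq_mul]
    rw [show Complex.normSq (Complex.exp (↑θ * Complex.I)) = 1 by
      rw [Complex.normSq_eq_norm_sq, Complex.norm_exp_ofReal_mul_I]; norm_num]
    rw [one_mul]
  have hconj : (starRingEnd ℂ) u = Complex.exp (-(↑θ * Complex.I)) * (starRingEnd ℂ) w := by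
    rw [hu, map_mul, ← Complex.exp_conj]
    congr 1
    simp [map_mul, Complex.conj_I]
  have h4 : z * (starRingEnd ℂ) u = ζ * Complex.exp (-(↑θ * Complex.I)) := by
    rw [hconj, hζ]; ring
  have h5 : ζ = (‖ζ‖ : ℂ) * Complex.exp (↑ζ.arg * Complex.I) :=
    (Complex.norm_mul_exp_arg_mul_I ζ).symm
  have h6 : ζ * Complex.exp (-(↑θ * Complex.I))
      = (‖ζ‖ : ℂ) * Complex.exp (↑(ζ.arg - θ) * Complex.I) := by
    conv_lhs => rw [h5]
    rw [mul_assoc, ← Complex.exp_add]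
    congr 2
    push_cast
    ring
  have h7 : (z * (starRingEnd ℂ) u).re = ‖ζ‖ * Real.cos (ζ.arg - θ) := by
    rw [h4, h6, Complex.re_ofReal_mul, Complex.exp_ofReal_mul_I_re]
  have h8 : ‖ζ‖ = ‖z‖ * ‖w‖ := by
    rw [hζ, norm_mul, Complex.norm_conj]
  have h9 : Real.cos (ζ.arg - θ) = Real.cos (θ - ζ.arg) := by
    rw [← Real.cos_neg]; congr 1; ring
  rw [h1, Complex.normSq_sub, h2, h3, h7, h8, h9]
  ring

set_option maxHeartbeats 1000000 in
lemma angular_core (ε : ℝ) (hε0 : 0 < ε) (hε : ε < 25 * Real.pi ^ 2 / 3872)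
    (z w : ℂ) (hz : 5/11 ≤ ‖z‖) (hw : 5/11 ≤ ‖w‖) :
    volume ({θ : ℝ | |‖z - Complex.exp (↑θ * Complex.I) * w‖ - 1| ≤ ε} ∩ Ioc 0 (2*Real.pi))
      ≤ ENNReal.ofReal (44/5 * Real.sqrt (2*ε)) := by
  have hπ : Real.pi < 3.15 := Real.pi_lt_d2
  have hπ0 : 0 < Real.pi := Real.pi_pos
  have hε1 : ε < 1 := by nlinarith
  set r := ‖z‖ with hr
  set s := ‖w‖ with hs
  have hr0 : (0:ℝ) < r := lt_of_lt_of_le (by norm_num) hz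
  have hs0 : (0:ℝ) < s := lt_of_lt_of_le (by norm_num) hw
  have hrs : (25/121 : ℝ) ≤ r * s := by nlinarith
  have hrs0 : (0:ℝ) < r * s := by positivity
  set φ := (z * (starRingEnd ℂ) w).arg with hφ
  set a := (r^2 + s^2 - (1+ε)^2) / (2*(r*s)) with ha
  set b := (r^2 + s^2 - (1-ε)^2) / (2*(r*s)) with hb
  -- inclusion into the cosine set
  have hincl : {θ : ℝ | |‖z - Complex.exp (↑θ * Complex.I) * w‖ - 1| ≤ ε}
      ⊆ {θ : ℝ | Real.cos (θ - φ) ∈ Icc a b} := by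
    intro θ hθ
    simp only [mem_setOf_eq] at hθ ⊢
    have hd0 : 0 ≤ ‖z - Complex.exp (↑θ * Complex.I) * w‖ := norm_nonneg _
    have habs := abs_le.1 hθ
    have hsq := dist_sq_eq z w θ
    rw [← hr, ← hs, ← hφ] at hsq
    have hup : ‖z - Complex.exp (↑θ * Complex.I) * w‖ ^ 2 ≤ (1+ε)^2 := by nlinarith
    have hlow : (1-ε)^2 ≤ ‖z - Complex.exp (↑θ * Complex.I) * w‖ ^ 2 := by nlinarith
    constructor
    · rw [ha, div_le_iff₀ (by positivity : (0:ℝ) < 2*(r*s))]; nlinarith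
    · rw [hb, le_div_iff₀ (by positivity : (0:ℝ) < 2*(r*s))]; nlinarith
  set B := Real.cos ⁻¹' Icc a b with hB
  have hBmeas : MeasurableSet B := Real.measurable_cos measurableSet_Icc
  have htrans : {θ : ℝ | Real.cos (θ - φ) ∈ Icc a b} ∩ Ioc 0 (2*Real.pi)
      = (fun x : ℝ => x + -φ) ⁻¹' (B ∩ Ioc (-φ) (-φ + 2*Real.pi)) := by
    ext x
    simp only [mem_inter_iff, mem_setOf_eq, mem_preimage, mem_Ioc, hB, mem_preimage, mem_Icc]
    constructor
    · rintro ⟨h1, h2, h3⟩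
      exact ⟨by rw [← sub_eq_add_neg]; exact h1, by linarith, by linarith⟩
    · rintro ⟨h1, h2, h3⟩
      rw [← sub_eq_add_neg] at h1
      exact ⟨h1, by linarith, by linarith⟩
  have hmono : volume ({θ : ℝ | |‖z - Complex.exp (↑θ * Complex.I) * w‖ - 1| ≤ ε}
        ∩ Ioc 0 (2*Real.pi))
      ≤ volume (B ∩ Ioc (-φ) (-φ + 2*Real.pi)) := by
    calc volume ({θ : ℝ | |‖z - Complex.exp (↑θ * Complex.I) * w‖ - 1| ≤ ε} ∩ Ioc 0 (2*Real.pi))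
        ≤ volume ({θ : ℝ | Real.cos (θ - φ) ∈ Icc a b} ∩ Ioc 0 (2*Real.pi)) :=
          measure_mono (inter_subset_inter_left _ hincl)
      _ = volume (B ∩ Ioc (-φ) (-φ + 2*Real.pi)) := by
          rw [htrans]; exact measure_preimage_add_right volume _ _
  have hper : ∀ (x : ℝ) (n : ℤ), x + n * (2 * Real.pi) ∈ B ↔ x ∈ B := by
    intro x n
    simp only [hB, mem_preimage, Real.cos_add_int_mul_two_pi]
  have hwin := window_le hBmeas hper (-φ)
  -- clamped endpoints
  set a' := max a (-1) with ha'
  set b' := min b 1 with hb'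
  have hBeq : B = Real.cos ⁻¹' Icc a' b' := by
    ext θ
    simp only [hB, mem_preimage, mem_Icc, ha', hb']
    constructor
    · rintro ⟨h1, h2⟩
      exact ⟨max_le h1 (Real.neg_one_le_cos θ), le_min h2 (Real.cos_le_one θ)⟩
    · rintro ⟨h1, h2⟩
      exact ⟨le_trans (le_max_left _ _) h1, le_trans h2 (min_le_left _ _)⟩
  have hba : b - a = 2 * ε / (r * s) := by
    rw [ha, hb]
    field_simp
    ring
  have hεbound : 2 * ε / (r * s) ≤ 242 * ε / 25 := by
    rw [div_le_div_iff₀ hrs0 (by norm_num)]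
    nlinarith
  have hwmax : 242 * ε / 25 ≤ Real.pi ^ 2 / 16 := by linarith
  rcases le_or_gt a' b' with hab' | hab'
  · have h1 : volume (B ∩ Ioc 0 (2*Real.pi))
        ≤ ENNReal.ofReal (2 * (Real.arccos a' - Real.arccos b')) := by
      rw [hBeq]
      exact cos_preimage_Ioc_le (le_max_right _ _) hab' (min_le_right _ _)
    have h2 : Real.arccos a' - Real.arccos b' ≤ Real.arccos (1 - (b' - a')) :=
      arccos_sub_arccos_le (le_max_right _ _) hab' (min_le_right _ _)
    have hw' : b' - a' ≤ 242 * ε / 25 := by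
      have hx1 : a ≤ a' := le_max_left _ _
      have hx2 : b' ≤ b := min_le_left _ _
      have hx3 : b' - a' ≤ b - a := by linarith
      rw [hba] at hx3
      linarith
    have h3 : Real.arccos (1 - (b' - a')) ≤ Real.arccos (1 - 242 * ε / 25) :=
      arccos_antitone (by linarith)
    have h4 : Real.arccos (1 - 242 * ε / 25) ≤ 2 * Real.sqrt (242 * ε / 25) :=
      arccos_one_sub_le (by positivity) hwmax
    have h5 : Real.sqrt (242 * ε / 25) = 11/5 * Real.sqrt (2 * ε) := by
      rw [show (242 * ε / 25 : ℝ) = (11/5)^2 * (2*ε) by ring,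
        Real.sqrt_mul (by positivity), Real.sqrt_sq (by norm_num)]
    calc volume ({θ : ℝ | |‖z - Complex.exp (↑θ * Complex.I) * w‖ - 1| ≤ ε} ∩ Ioc 0 (2*Real.pi))
        ≤ volume (B ∩ Ioc (-φ) (-φ + 2*Real.pi)) := hmono
      _ ≤ volume (B ∩ Ioc 0 (2*Real.pi)) := hwin
      _ ≤ ENNReal.ofReal (2 * (Real.arccos a' - Real.arccos b')) := h1
      _ ≤ ENNReal.ofReal (44/5 * Real.sqrt (2*ε)) := by
          apply ENNReal.ofReal_le_ofReal
          rw [h5] at h4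
          linarith
  · -- empty set
    have hBempty : B ∩ Ioc 0 (2*Real.pi) = ∅ := by
      rw [hBeq]
      ext θ
      simp only [mem_inter_iff, mem_preimage, mem_Icc, mem_empty_iff_false, iff_false]
      rintro ⟨⟨h1, h2⟩, _⟩
      exact absurd (le_trans h1 h2) (not_le.2 hab')
    calc volume ({θ : ℝ | |‖z - Complex.exp (↑θ * Complex.I) * w‖ - 1| ≤ ε} ∩ Ioc 0 (2*Real.pi))
        ≤ volume (B ∩ Ioc (-φ) (-φ + 2*Real.pi)) := hmono
      _ ≤ volume (B ∩ Ioc 0 (2*Real.pi)) := hwin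
      _ = 0 := by rw [hBempty, measure_empty]
      _ ≤ _ := zero_le


set_option maxHeartbeats 2000000 in
lemma radial_bound (ε : ℝ) (hε0 : 0 < ε) (hε : ε < 25 * Real.pi ^ 2 / 3872)
    (μ : Measure E2) [IsProbabilityMeasure μ] (hrad : RadiallySymmetric μ) :
    ((μ.prod μ) (Sset ε)).toReal < 2/3 := by
  have hπ : Real.pi < 3.15 := Real.pi_lt_d2
  have hπ0 : 0 < Real.pi := Real.pi_pos
  have hε1 : ε < 1/11 := by nlinarith
  -- move to ℂ
  set e : ℂ ≃ₗᵢ[ℝ] E2 := Complex.orthonormalBasisOneI.repr with he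
  have hem : Measurable ⇑e.symm := e.symm.continuous.measurable
  have hem' : Measurable ⇑e := e.continuous.measurable
  set ν : Measure ℂ := μ.map ⇑e.symm with hν
  haveI : IsProbabilityMeasure ν := Measure.isProbabilityMeasure_map hem.aemeasurable
  set S' : Set (ℂ × ℂ) := {p | |‖p.1 - p.2‖ - 1| ≤ ε} with hS'
  have hS'meas : MeasurableSet S' := by
    have : S' = (fun p : ℂ × ℂ => |‖p.1 - p.2‖ - 1|) ⁻¹' (Iic ε) := rfl
    rw [this]
    exact (IsClosed.preimage (by fun_prop) isClosed_Iic).measurableSet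
  have hkey : (μ.prod μ) (Sset ε) = (ν.prod ν) S' := by
    rw [hν, Measure.map_prod_map _ _ hem hem,
      Measure.map_apply (hem.prodMap hem) hS'meas]
    congr 1
    ext p
    simp only [Sset, hS', mem_preimage, mem_setOf_eq, Prod.map]
    rw [← map_sub e.symm, e.symm.norm_map]
  -- rotation invariance of ν
  have hrot : ∀ θ : ℝ, ν.map (fun z : ℂ => Complex.exp (↑θ * Complex.I) * z) = ν := by
    intro θ
    have hfun : (fun z : ℂ => Complex.exp (↑θ * Complex.I) * z) = ⇑(rotation (Circle.exp θ)) := by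
      funext z; rw [rotation_apply, Circle.coe_exp]
    set Q : E2 ≃ₗᵢ[ℝ] E2 := (e.symm.trans (rotation (Circle.exp θ))).trans e with hQdef
    have hQm : Measurable ⇑Q := Q.continuous.measurable
    have hrm : Measurable ⇑(rotation (Circle.exp θ)) :=
      (rotation (Circle.exp θ)).continuous.measurable
    have hcomp : ⇑e.symm ∘ ⇑Q = ⇑(rotation (Circle.exp θ)) ∘ ⇑e.symm := by
      funext x
      simp [hQdef, LinearIsometryEquiv.trans_apply]
    rw [hfun, hν, Measure.map_map hrm hem, ← hcomp, ← Measure.map_map hem hQm, hrad Q]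
  -- the moving set
  set M : Set (ℝ × (ℂ × ℂ)) :=
    {q | |‖q.2.1 - Complex.exp (↑q.1 * Complex.I) * q.2.2‖ - 1| ≤ ε} with hM
  have hMmeas : MeasurableSet M := by
    have : M = (fun q : ℝ × (ℂ × ℂ) =>
        |‖q.2.1 - Complex.exp (↑q.1 * Complex.I) * q.2.2‖ - 1|) ⁻¹' (Iic ε) := rfl
    rw [this]
    exact (IsClosed.preimage (by fun_prop) isClosed_Iic).measurableSet
  have hslicemeas : ∀ θ : ℝ, MeasurableSet {p : ℂ × ℂ | (θ, p) ∈ M} :=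
    fun θ => measurable_prodMk_left hMmeas
  have hslice : ∀ θ : ℝ, (ν.prod ν) {p : ℂ × ℂ | (θ, p) ∈ M} = (ν.prod ν) S' := by
    intro θ
    have hrotm : Measurable (fun z : ℂ => Complex.exp (↑θ * Complex.I) * z) :=
      (continuous_const.mul continuous_id).measurable
    have hset : {p : ℂ × ℂ | (θ, p) ∈ M}
        = (Prod.map (id : ℂ → ℂ) (fun z : ℂ => Complex.exp (↑θ * Complex.I) * z)) ⁻¹' S' := rfl
    rw [hset, ← Measure.map_apply (measurable_id.prodMap hrotm) hS'meas,
      ← Measure.map_prod_map _ _ measurable_id hrotm, Measure.map_id, hrot θ]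
  -- H function
  set P : Set ℂ := {z | ‖z‖ < 5/11} with hP
  set Qs : Set ℂ := {z | |‖z‖ - 1| ≤ ε + 5/11} with hQs
  have hPmeas : MeasurableSet P :=
    (isOpen_lt (by fun_prop) continuous_const).measurableSet
  have hQsmeas : MeasurableSet Qs := by
    have : Qs = (fun z : ℂ => |‖z‖ - 1|) ⁻¹' (Iic (ε + 5/11)) := rfl
    rw [this]
    exact (IsClosed.preimage (by fun_prop) isClosed_Iic).measurableSet
  set cc : ℝ≥0∞ := ENNReal.ofReal (22 * Real.sqrt 2 * Real.sqrt ε / (5 * Real.pi)) with hcc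
  set Hf : ℂ × ℂ → ℝ≥0∞ := fun p =>
    (P ×ˢ Qs).indicator (fun _ => (1:ℝ≥0∞)) p + (Qs ×ˢ P).indicator (fun _ => (1:ℝ≥0∞)) p
      + (Pᶜ ×ˢ Pᶜ).indicator (fun _ => cc) p with hHf
  have hHfmeas : Measurable Hf := by
    apply Measurable.add
    apply Measurable.add
    · exact measurable_const.indicator (hPmeas.prod hQsmeas)
    · exact measurable_const.indicator (hQsmeas.prod hPmeas)
    · exact measurable_const.indicator (hPmeas.compl.prod hPmeas.compl)
  have hcmul : ENNReal.ofReal (2 * Real.pi) * cc = ENNReal.ofReal (44/5 * Real.sqrt (2*ε)) := by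
    rw [hcc, ← ENNReal.ofReal_mul (by positivity)]
    congr 1
    rw [Real.sqrt_mul (by norm_num : (0:ℝ) ≤ 2)]
    field_simp
    ring
  -- pointwise angular bound
  have hpoint : ∀ p : ℂ × ℂ,
      (∫⁻ θ in Ioc 0 (2*Real.pi), M.indicator (fun _ => (1:ℝ≥0∞)) (θ, p) ∂volume)
        ≤ ENNReal.ofReal (2 * Real.pi) * Hf p := by
    intro p
    have hind : (fun θ : ℝ => M.indicator (fun _ => (1:ℝ≥0∞)) (θ, p))
        = fun θ : ℝ => ({θ' : ℝ | (θ', p) ∈ M}).indicator (fun _ => (1:ℝ≥0∞)) θ := by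
      funext θ
      simp only [indicator_apply, mem_setOf_eq]
    have hsmeas : MeasurableSet {θ' : ℝ | (θ', p) ∈ M} := measurable_prodMk_right hMmeas
    have heval : (∫⁻ θ in Ioc 0 (2*Real.pi), M.indicator (fun _ => (1:ℝ≥0∞)) (θ, p) ∂volume)
        = volume ({θ' : ℝ | (θ', p) ∈ M} ∩ Ioc 0 (2*Real.pi)) := by
      rw [hind, lintegral_indicator hsmeas, setLIntegral_one,
        Measure.restrict_apply hsmeas]
    rw [heval]
    have hsetM : {θ' : ℝ | (θ', p) ∈ M}
        = {θ : ℝ | |‖p.1 - Complex.exp (↑θ * Complex.I) * p.2‖ - 1| ≤ ε} := rfl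
    have hnormu : ∀ θ : ℝ, ‖Complex.exp (↑θ * Complex.I) * p.2‖ = ‖p.2‖ := by
      intro θ
      rw [norm_mul, Complex.norm_exp_ofReal_mul_I, one_mul]
    by_cases hz : p.1 ∈ P
    · by_cases hw : p.2 ∈ P
      · -- both small : empty
        have hempty : {θ' : ℝ | (θ', p) ∈ M} = ∅ := by
          ext θ
          rw [hsetM]
          simp only [mem_setOf_eq, mem_empty_iff_false, iff_false, not_le]
          have hd : ‖p.1 - Complex.exp (↑θ * Complex.I) * p.2‖ ≤ ‖p.1‖ + ‖p.2‖ := by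
            calc ‖p.1 - Complex.exp (↑θ * Complex.I) * p.2‖
                ≤ ‖p.1‖ + ‖Complex.exp (↑θ * Complex.I) * p.2‖ := norm_sub_le _ _
              _ = ‖p.1‖ + ‖p.2‖ := by rw [hnormu]
          have hz' : ‖p.1‖ < 5/11 := hz
          have hw' : ‖p.2‖ < 5/11 := hw
          have : |‖p.1 - Complex.exp (↑θ * Complex.I) * p.2‖ - 1|
              ≥ 1 - ‖p.1 - Complex.exp (↑θ * Complex.I) * p.2‖ := by
            rw [abs_sub_comm]
            exact le_abs_self _
          linarith
        rw [hempty, empty_inter, measure_empty]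
        exact zero_le
      · by_cases hq : p.2 ∈ Qs
        · -- P × Qs : bound by full measure
          have h1 : (1:ℝ≥0∞) ≤ Hf p := by
            simp only [hHf]
            have : (P ×ˢ Qs).indicator (fun _ => (1:ℝ≥0∞)) p = 1 :=
              indicator_of_mem (mk_mem_prod hz hq) _
            rw [this]
            exact le_add_right (le_add_right le_rfl)
          calc volume ({θ' : ℝ | (θ', p) ∈ M} ∩ Ioc 0 (2*Real.pi))
              ≤ volume (Ioc (0:ℝ) (2*Real.pi)) := measure_mono inter_subset_right
            _ = ENNReal.ofReal (2*Real.pi) := by rw [Real.volume_Ioc, sub_zero]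
            _ = ENNReal.ofReal (2*Real.pi) * 1 := (mul_one _).symm
            _ ≤ ENNReal.ofReal (2*Real.pi) * Hf p := mul_le_mul_right h1 _
        · -- w not in Qs : empty
          have hempty : {θ' : ℝ | (θ', p) ∈ M} = ∅ := by
            ext θ
            rw [hsetM]
            simp only [mem_setOf_eq, mem_empty_iff_false, iff_false, not_le]
            by_contra hcon
            push_neg at hcon
            apply hq
            rw [hQs, mem_setOf_eq]
            set u := Complex.exp (↑θ * Complex.I) * p.2 with hu
            have h2 : |‖u‖ - ‖u - p.1‖| ≤ ‖p.1‖ := by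
              have := abs_norm_sub_norm_le u (u - p.1)
              simpa using this
            have h3 : ‖u - p.1‖ = ‖p.1 - u‖ := norm_sub_rev _ _
            have hz' : ‖p.1‖ < 5/11 := hz
            have h4 : ‖u‖ = ‖p.2‖ := hnormu θ
            rw [abs_le] at hcon ⊢
            rw [abs_le] at h2
            constructor <;> [skip; skip] <;> rw [← h4] <;> nlinarith [hcon.1, hcon.2, h2.1, h2.2]
          rw [hempty, empty_inter, measure_empty]
          exact zero_le
    · by_cases hw : p.2 ∈ P
      · by_cases hq : p.1 ∈ Qs
        · have h1 : (1:ℝ≥0∞) ≤ Hf p := by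
            simp only [hHf]
            have : (Qs ×ˢ P).indicator (fun _ => (1:ℝ≥0∞)) p = 1 :=
              indicator_of_mem (mk_mem_prod hq hw) _
            rw [this]
            exact le_add_right (le_add_left le_rfl)
          calc volume ({θ' : ℝ | (θ', p) ∈ M} ∩ Ioc 0 (2*Real.pi))
              ≤ volume (Ioc (0:ℝ) (2*Real.pi)) := measure_mono inter_subset_right
            _ = ENNReal.ofReal (2*Real.pi) := by rw [Real.volume_Ioc, sub_zero]
            _ = ENNReal.ofReal (2*Real.pi) * 1 := (mul_one _).symm
            _ ≤ ENNReal.ofReal (2*Real.pi) * Hf p := mul_le_mul_right h1 _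
        · have hempty : {θ' : ℝ | (θ', p) ∈ M} = ∅ := by
            ext θ
            rw [hsetM]
            simp only [mem_setOf_eq, mem_empty_iff_false, iff_false, not_le]
            by_contra hcon
            push_neg at hcon
            apply hq
            rw [hQs, mem_setOf_eq]
            set u := Complex.exp (↑θ * Complex.I) * p.2 with hu
            have h2 : |‖p.1‖ - ‖p.1 - u‖| ≤ ‖u‖ := by
              have := abs_norm_sub_norm_le p.1 (p.1 - u)
              simpa using this
            have hw' : ‖p.2‖ < 5/11 := hw
            have h4 : ‖u‖ = ‖p.2‖ := hnormu θ
            rw [abs_le] at hcon ⊢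
            rw [abs_le] at h2
            constructor <;> nlinarith [hcon.1, hcon.2, h2.1, h2.2]
          rw [hempty, empty_inter, measure_empty]
          exact zero_le
      · -- main case
        have hz' : 5/11 ≤ ‖p.1‖ := le_of_not_gt hz
        have hw' : 5/11 ≤ ‖p.2‖ := le_of_not_gt hw
        have hcore := angular_core ε hε0 hε p.1 p.2 hz' hw'
        have h1 : cc ≤ Hf p := by
          simp only [hHf]
          have : (Pᶜ ×ˢ Pᶜ).indicator (fun _ => cc) p = cc :=
            indicator_of_mem (mk_mem_prod (mem_compl hz) (mem_compl hw)) _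
          rw [this]
          exact le_add_self
        calc volume ({θ' : ℝ | (θ', p) ∈ M} ∩ Ioc 0 (2*Real.pi))
            ≤ ENNReal.ofReal (44/5 * Real.sqrt (2*ε)) := by rw [hsetM]; exact hcore
          _ = ENNReal.ofReal (2*Real.pi) * cc := hcmul.symm
          _ ≤ ENNReal.ofReal (2*Real.pi) * Hf p := mul_le_mul_right h1 _
  -- averaging
  have hFmeas : Measurable (fun q : ℝ × (ℂ × ℂ) => M.indicator (fun _ => (1:ℝ≥0∞)) q) :=
    measurable_const.indicator hMmeas
  have havg : (ν.prod ν) S' * ENNReal.ofReal (2*Real.pi)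
      ≤ ENNReal.ofReal (2*Real.pi) * ∫⁻ p, Hf p ∂(ν.prod ν) := by
    have e1 : (ν.prod ν) S' * ENNReal.ofReal (2*Real.pi)
        = ∫⁻ θ in Ioc 0 (2*Real.pi), (ν.prod ν) {p : ℂ × ℂ | (θ, p) ∈ M} ∂volume := by
      rw [lintegral_congr (fun θ => hslice θ), setLIntegral_const, Real.volume_Ioc, sub_zero]
    have e2 : ∀ θ : ℝ, (ν.prod ν) {p : ℂ × ℂ | (θ, p) ∈ M}
        = ∫⁻ p, M.indicator (fun _ => (1:ℝ≥0∞)) (θ, p) ∂(ν.prod ν) := by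
      intro θ
      have : (fun p : ℂ × ℂ => M.indicator (fun _ => (1:ℝ≥0∞)) (θ, p))
          = fun p : ℂ × ℂ => ({p' : ℂ × ℂ | (θ, p') ∈ M}).indicator (fun _ => (1:ℝ≥0∞)) p := by
        funext p; simp only [indicator_apply, mem_setOf_eq]
      rw [this, lintegral_indicator (hslicemeas θ), setLIntegral_one]
    have e3 : ∫⁻ θ in Ioc 0 (2*Real.pi), (∫⁻ p, M.indicator (fun _ => (1:ℝ≥0∞)) (θ, p)
          ∂(ν.prod ν)) ∂volume
        = ∫⁻ p, (∫⁻ θ in Ioc 0 (2*Real.pi), M.indicator (fun _ => (1:ℝ≥0∞)) (θ, p) ∂volume)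
          ∂(ν.prod ν) :=
      lintegral_lintegral_swap hFmeas.aemeasurable
    rw [e1, lintegral_congr (fun θ => e2 θ), e3]
    calc ∫⁻ p, (∫⁻ θ in Ioc 0 (2*Real.pi),
          M.indicator (fun _ => (1:ℝ≥0∞)) (θ, p) ∂volume) ∂(ν.prod ν)
        ≤ ∫⁻ p, ENNReal.ofReal (2*Real.pi) * Hf p ∂(ν.prod ν) := lintegral_mono hpoint
      _ = ENNReal.ofReal (2*Real.pi) * ∫⁻ p, Hf p ∂(ν.prod ν) :=
          lintegral_const_mul _ hHfmeas
  have hNle : (ν.prod ν) S' ≤ ∫⁻ p, Hf p ∂(ν.prod ν) := by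
    have h2π : ENNReal.ofReal (2*Real.pi) ≠ 0 := by
      simp only [ne_eq, ENNReal.ofReal_eq_zero, not_le]; positivity
    rw [mul_comm] at havg
    exact (ENNReal.mul_le_mul_iff_right h2π ENNReal.ofReal_ne_top).mp havg
  -- compute ∫⁻ Hf
  have hHint : ∫⁻ p, Hf p ∂(ν.prod ν)
      = ν P * ν Qs + ν Qs * ν P + cc * (ν Pᶜ * ν Pᶜ) := by
    simp only [hHf]
    rw [lintegral_add_right _ (measurable_const.indicator (hPmeas.compl.prod hPmeas.compl)),
      lintegral_add_right _ (measurable_const.indicator (hQsmeas.prod hPmeas))]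
    rw [lintegral_indicator_const (hPmeas.prod hQsmeas),
      lintegral_indicator_const (hQsmeas.prod hPmeas),
      lintegral_indicator_const (hPmeas.compl.prod hPmeas.compl)]
    rw [Measure.prod_prod, Measure.prod_prod, Measure.prod_prod, one_mul, one_mul]
  -- to reals
  have hdisj : Disjoint P Qs := by
    rw [disjoint_left]
    intro z hzP hzQ
    rw [hP, mem_setOf_eq] at hzP
    rw [hQs, mem_setOf_eq] at hzQ
    have : 1 - ‖z‖ ≤ |‖z‖ - 1| := by rw [abs_sub_comm]; exact le_abs_self _
    linarith
  have hPQ : ν P + ν Qs ≤ 1 := by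
    rw [← measure_union hdisj hQsmeas]
    exact prob_le_one
  set pR := (ν P).toReal with hpR
  set qR := (ν Qs).toReal with hqR
  have hfin : ∀ s : Set ℂ, ν s ≠ ⊤ := fun s => measure_ne_top ν s
  have hpq1 : pR + qR ≤ 1 := by
    rw [hpR, hqR, ← ENNReal.toReal_add (hfin P) (hfin Qs)]
    calc (ν P + ν Qs).toReal ≤ (1:ℝ≥0∞).toReal :=
      ENNReal.toReal_mono (by norm_num) hPQ
    _ = 1 := by norm_num
  have hcompl : (ν Pᶜ).toReal = 1 - pR := by
    rw [prob_compl_eq_one_sub hPmeas, hpR]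
    rw [ENNReal.toReal_sub_of_le prob_le_one (by norm_num)]
    norm_num
  set cR := 22 * Real.sqrt 2 * Real.sqrt ε / (5 * Real.pi) with hcR
  have hcR0 : 0 ≤ cR := by positivity
  have hcRhalf : cR < 1/2 := by
    rw [hcR, div_lt_iff₀ (by positivity)]
    have hsε := Real.sq_sqrt hε0.le
    have hs2 : Real.sqrt 2 ^ 2 = 2 := Real.sq_sqrt (by norm_num)
    nlinarith [Real.sqrt_nonneg ε, Real.sqrt_nonneg 2, mul_nonneg (Real.sqrt_nonneg 2) (Real.sqrt_nonneg ε)]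
  have hccR : cc.toReal = cR := by rw [hcc, ENNReal.toReal_ofReal hcR0]
  have hNfin : (ν.prod ν) S' ≠ ⊤ := measure_ne_top _ _
  have hNreal : ((ν.prod ν) S').toReal ≤ pR * qR + qR * pR + cR * ((1 - pR) * (1 - pR)) := by
    have hRHSfin : ν P * ν Qs + ν Qs * ν P + cc * (ν Pᶜ * ν Pᶜ) ≠ ⊤ := by
      apply ENNReal.add_ne_top.2
      constructor
      · apply ENNReal.add_ne_top.2
        exact ⟨ENNReal.mul_ne_top (hfin P) (hfin Qs), ENNReal.mul_ne_top (hfin Qs) (hfin P)⟩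
      · exact ENNReal.mul_ne_top ENNReal.ofReal_ne_top
          (ENNReal.mul_ne_top (hfin _) (hfin _))
    have := ENNReal.toReal_mono hRHSfin (hHint ▸ hNle)
    rw [ENNReal.toReal_add (by
        apply ENNReal.add_ne_top.2
        exact ⟨ENNReal.mul_ne_top (hfin P) (hfin Qs), ENNReal.mul_ne_top (hfin Qs) (hfin P)⟩)
      (ENNReal.mul_ne_top ENNReal.ofReal_ne_top (ENNReal.mul_ne_top (hfin _) (hfin _))),
      ENNReal.toReal_add (ENNReal.mul_ne_top (hfin P) (hfin Qs))
        (ENNReal.mul_ne_top (hfin Qs) (hfin P)),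
      ENNReal.toReal_mul, ENNReal.toReal_mul, ENNReal.toReal_mul, ENNReal.toReal_mul,
      hccR, hcompl] at this
    exact this
  rw [hkey]
  have hp0 : 0 ≤ pR := ENNReal.toReal_nonneg
  have hq0 : 0 ≤ qR := ENNReal.toReal_nonneg
  have hfinal : pR * qR + qR * pR + cR * ((1 - pR) * (1 - pR)) < 2/3 := by
    have hL1 : pR * qR + qR * pR + cR * ((1 - pR) * (1 - pR))
        ≤ 2 * (1 - pR) - (2 - cR) * ((1 - pR) * (1 - pR)) := by
      nlinarith [mul_nonneg hp0 (show (0:ℝ) ≤ 1 - pR - qR by linarith)]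
    have hL2 : (2 - cR) * (2 * (1 - pR) - (2 - cR) * ((1 - pR) * (1 - pR))) ≤ 1 := by
      nlinarith [sq_nonneg (1 - (2 - cR) * (1 - pR))]
    have hL3 : 2 * (1 - pR) - (2 - cR) * ((1 - pR) * (1 - pR)) < 2/3 := by
      nlinarith [hL2, hcRhalf]
    linarith
  linarith

end SymBreak

open SymBreak in
/-- In dimension 2, for every `0 < ε < (5π/(44√2))²`, no minimizer of `E_ε` is radially
symmetric. -/
theorem symmetry_breaking_dim_two (ε : ℝ) (hε0 : 0 < ε)
    (hε : ε < (5 * Real.pi / (44 * Real.sqrt 2))^2) :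
    ∀ μ : Measure (EuclideanSpace ℝ (Fin 2)),
      IsMinimizer 2 (fun x => ((Weps 2 ε x : ℝ) : EReal)) μ → ¬ RadiallySymmetric μ := by
  intro μ hmin hrad
  obtain ⟨hprob, hopt⟩ := hmin
  have heq : (5 * Real.pi / (44 * Real.sqrt 2))^2 = 25 * Real.pi ^ 2 / 3872 := by
    rw [div_pow, mul_pow, mul_pow, Real.sq_sqrt (by norm_num : (0:ℝ) ≤ 2)]
    norm_num
  rw [heq] at hε
  have hπ : Real.pi < 3.15 := Real.pi_lt_d2
  have hπ0 : 0 < Real.pi := Real.pi_pos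
  have hε1 : ε < 1 := by nlinarith
  haveI := hprob
  have htri := hopt triMeasure inferInstance
  rw [energy_eq ε μ, energy_eq ε triMeasure, tri_prod_Sset ε hε0.le hε1] at htri
  have h23 : ((2/3 : ℝ≥0∞)).toReal = 2/3 := by
    rw [ENNReal.toReal_div]
    norm_num
  rw [h23, EReal.coe_le_coe_iff] at htri
  have hrb := radial_bound ε hε0 hε μ hrad
  linarith
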